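/- Fix θ ∈ ℝ and for a C² function w of (x, y, t) ∈ ℝ³ write w_X = cosθ·∂_x w − sinθ·∂_y w, w_Y = sinθ·∂_x w + cosθ·∂_y w, and let w_XX, w_XY, w_Xt, w_YY, w_tt denote the corresponding second derivatives (e.g. w_XX = X(Xw), w_Xt = ∂_t(Xw)). There exists ε₀ > 0 (independent of θ) such that the following holds for all 0 < ε ≤ ε₀. Let u be a C² function on a neighborhood of a point x₀ in the ball of radius 1/4 centered at 0 in ℝ³, and set v(x,y,t) = u(x,y,t) + 16ε(x² + y² + t²). Suppose that at x₀: the Hessian matrix D²v(x₀) is positive semidefinite, |Dv(x₀)| ≤ ε/2, and u satisfies (u_XX + 1)(u_YY + u_tt + u_t + 1) − u_XY² − u_Xt² = K for some K > 0 with u_XX + 1 > 0 and u_YY + u_tt + u_t + 1 > 0. Then at x₀ one has v_XX + v_YY + v_tt + 1/2 ≤ 2K, and hence det D²v(x₀) ≤ (2K/3)³. -/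

import Mathlib

open Metric

/-- The partial derivative of `w : ℝ³ → ℝ` in the `i`-th coordinate direction
(coordinates `(x, y, t)` correspond to indices `0, 1, 2`). -/
noncomputable def pd (i : Fin 3) (w : EuclideanSpace ℝ (Fin 3) → ℝ) :
    EuclideanSpace ℝ (Fin 3) → ℝ :=
  fun x => fderiv ℝ w x (EuclideanSpace.single i (1 : ℝ))

/-- The derivative `w_X = cos θ ∂_x w − sin θ ∂_y w`. -/
noncomputable def Xd (θ : ℝ) (w : EuclideanSpace ℝ (Fin 3) → ℝ) :
    EuclideanSpace ℝ (Fin 3) → ℝ :=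
  fun x => Real.cos θ * pd 0 w x - Real.sin θ * pd 1 w x

/-- The derivative `w_Y = sin θ ∂_x w + cos θ ∂_y w`. -/
noncomputable def Yd (θ : ℝ) (w : EuclideanSpace ℝ (Fin 3) → ℝ) :
    EuclideanSpace ℝ (Fin 3) → ℝ :=
  fun x => Real.sin θ * pd 0 w x + Real.cos θ * pd 1 w x

/-- The Hessian matrix of second partial derivatives of `w : ℝ³ → ℝ` at `x`. -/
noncomputable def hessianMatrix (w : EuclideanSpace ℝ (Fin 3) → ℝ)
    (x : EuclideanSpace ℝ (Fin 3)) : Matrix (Fin 3) (Fin 3) ℝ :=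
  Matrix.of fun i j => pd i (pd j w) x

namespace KeyAux

open Matrix

abbrev E3 := EuclideanSpace ℝ (Fin 3)

noncomputable abbrev P (i : Fin 3) : E3 →L[ℝ] ℝ := EuclideanSpace.proj i

lemma hasFDerivAt_coord (i : Fin 3) (x : E3) :
    HasFDerivAt (fun p : E3 => p i) (P i) x := by
  have h := (P i).hasFDerivAt (x := x)
  exact h

noncomputable def qD (ε : ℝ) (x : E3) : E3 →L[ℝ] ℝ :=
  (16 * ε) • (((x 0 • P 0 + x 0 • P 0) + (x 1 • P 1 + x 1 • P 1)) + (x 2 • P 2 + x 2 • P 2))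

lemma qD_apply_single (ε : ℝ) (x : E3) (j : Fin 3) :
    qD ε x (EuclideanSpace.single j (1 : ℝ)) = 32 * ε * x j := by
  fin_cases j <;>
    simp [qD, EuclideanSpace.single_apply] <;> ring

lemma qf_hasFDerivAt (ε : ℝ) (x : E3) :
    HasFDerivAt (fun p : E3 => 16 * ε * ((p 0) ^ 2 + (p 1) ^ 2 + (p 2) ^ 2)) (qD ε x) x := by
  have h0 := (hasFDerivAt_coord 0 x).mul (hasFDerivAt_coord 0 x)
  have h1 := (hasFDerivAt_coord 1 x).mul (hasFDerivAt_coord 1 x)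
  have h2 := (hasFDerivAt_coord 2 x).mul (hasFDerivAt_coord 2 x)
  have h := ((h0.add h1).add h2).const_mul (16 * ε)
  simpa [pow_two, qD] using h

lemma qf_contDiff (ε : ℝ) :
    ContDiff ℝ 2 (fun p : E3 => 16 * ε * ((p 0) ^ 2 + (p 1) ^ 2 + (p 2) ^ 2)) := by
  have h : ∀ i : Fin 3, ContDiff ℝ 2 (fun p : E3 => (p i) ^ 2) := fun i =>
    (P i).contDiff.pow 2
  exact contDiff_const.mul (((h 0).add (h 1)).add (h 2))

lemma pd_differentiableAt {w : E3 → ℝ} {x : E3} (hw : ContDiffAt ℝ 2 w x) (j : Fin 3) :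
    DifferentiableAt ℝ (pd j w) x := by
  have h1 : ContDiffAt ℝ 1 (fderiv ℝ w) x := hw.fderiv_right (by norm_num)
  have h2 : DifferentiableAt ℝ (fderiv ℝ w) x := h1.differentiableAt (by norm_num)
  exact (ContinuousLinearMap.apply ℝ ℝ (EuclideanSpace.single j (1 : ℝ))).differentiableAt.comp x h2

lemma pd_comb {f g : E3 → ℝ} {x : E3} (hf : DifferentiableAt ℝ f x)
    (hg : DifferentiableAt ℝ g x) (a b : ℝ) (i : Fin 3) :
    pd i (fun y => a * f y + b * g y) x = a * pd i f x + b * pd i g x := by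
  have h : HasFDerivAt (fun y => a * f y + b * g y)
      (a • fderiv ℝ f x + b • fderiv ℝ g x) x :=
    (hf.hasFDerivAt.const_mul a).add (hg.hasFDerivAt.const_mul b)
  simp [pd, h.fderiv]

lemma pd_Xd {w : E3 → ℝ} {x : E3} (hw : ContDiffAt ℝ 2 w x) (θ : ℝ) (i : Fin 3) :
    pd i (Xd θ w) x = Real.cos θ * pd i (pd 0 w) x - Real.sin θ * pd i (pd 1 w) x := by
  have hXd : Xd θ w = fun y => Real.cos θ * pd 0 w y + (-Real.sin θ) * pd 1 w y := by
    funext y; simp only [Xd]; ring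
  rw [hXd, pd_comb (pd_differentiableAt hw 0) (pd_differentiableAt hw 1)]
  ring

lemma pd_Yd {w : E3 → ℝ} {x : E3} (hw : ContDiffAt ℝ 2 w x) (θ : ℝ) (i : Fin 3) :
    pd i (Yd θ w) x = Real.sin θ * pd i (pd 0 w) x + Real.cos θ * pd i (pd 1 w) x := by
  have hYd : Yd θ w = fun y => Real.sin θ * pd 0 w y + Real.cos θ * pd 1 w y := by
    funext y; simp only [Yd]
  rw [hYd, pd_comb (pd_differentiableAt hw 0) (pd_differentiableAt hw 1)]

lemma psd_quad {M : Matrix (Fin 3) (Fin 3) ℝ} (hM : M.PosSemidef) (z : Fin 3 → ℝ) :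
    0 ≤ z ⬝ᵥ M *ᵥ z := by
  simpa using hM.dotProduct_mulVec_nonneg z

lemma psd_swap {M : Matrix (Fin 3) (Fin 3) ℝ} (hM : M.PosSemidef) (ξ η : Fin 3 → ℝ) :
    η ⬝ᵥ M *ᵥ ξ = ξ ⬝ᵥ M *ᵥ η := by
  have hs : ∀ i j, M j i = M i j := by
    intro i j
    have := congrFun (congrFun hM.1 i) j
    simpa [Matrix.conjTranspose_apply] using this
  simp only [dotProduct, Matrix.mulVec, Fin.sum_univ_three]
  rw [hs 0 1, hs 0 2, hs 1 2]
  ring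

lemma psd_cs {M : Matrix (Fin 3) (Fin 3) ℝ} (hM : M.PosSemidef) (ξ η : Fin 3 → ℝ) :
    (ξ ⬝ᵥ M *ᵥ η) ^ 2 ≤ (ξ ⬝ᵥ M *ᵥ ξ) * (η ⬝ᵥ M *ᵥ η) := by
  have key : ∀ t : ℝ, 0 ≤ (η ⬝ᵥ M *ᵥ η) * (t * t) + (2 * (ξ ⬝ᵥ M *ᵥ η)) * t + ξ ⬝ᵥ M *ᵥ ξ := by
    intro t
    have h := psd_quad hM (ξ + t • η)
    have hswap := psd_swap hM ξ η
    simp only [Matrix.mulVec_add, Matrix.mulVec_smul, add_dotProduct,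
      smul_dotProduct, dotProduct_add, dotProduct_smul,
      smul_eq_mul] at h
    rw [hswap] at h
    nlinarith [h]
  have hd := discrim_le_zero key
  rw [discrim] at hd
  nlinarith [hd]

lemma psd_det_le_cube {M : Matrix (Fin 3) (Fin 3) ℝ} (hM : M.PosSemidef) :
    M.det ≤ (M.trace / 3) ^ 3 := by
  have hdet : M.det = ∏ i, hM.1.eigenvalues i := by
    simpa using hM.1.det_eq_prod_eigenvalues
  have htr : M.trace = ∑ i, hM.1.eigenvalues i := by
    simpa using hM.1.trace_eq_sum_eigenvalues
  have h0 : ∀ i, 0 ≤ hM.1.eigenvalues i := hM.eigenvalues_nonneg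
  rw [hdet, htr, Fin.prod_univ_three, Fin.sum_univ_three]
  set a := hM.1.eigenvalues 0
  set b := hM.1.eigenvalues 1
  set c := hM.1.eigenvalues 2
  have ha := h0 0; have hb := h0 1; have hc := h0 2
  have key : 27 * (a * b * c) ≤ (a + b + c) ^ 3 := by
    nlinarith [mul_nonneg ha (sq_nonneg (b - c)), mul_nonneg hb (sq_nonneg (a - c)),
      mul_nonneg hc (sq_nonneg (a - b)),
      mul_nonneg (add_nonneg (add_nonneg ha hb) hc) (sq_nonneg (a - b)),
      mul_nonneg (add_nonneg (add_nonneg ha hb) hc) (sq_nonneg (b - c)),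
      mul_nonneg (add_nonneg (add_nonneg ha hb) hc) (sq_nonneg (a - c))]
  nlinarith [key]

end KeyAux

set_option maxHeartbeats 2000000
open KeyAux Matrix

/-- The key pointwise estimate (2.1) verified in Section 3: at a contact point `x₀` in the ball
of radius `1/4` where `v = u + 16ε(x² + y² + t²)` has positive semidefinite Hessian and small
gradient, and where `u` satisfies the reduced Calabi–Yau equation with right-hand side `K`,
one has `v_XX + v_YY + v_tt + 1/2 ≤ 2K` and `det D²v ≤ (2K/3)³`. -/
theorem key_pointwise_estimate :
    ∃ ε₀ : ℝ, 0 < ε₀ ∧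
      ∀ (θ ε : ℝ), 0 < ε → ε ≤ ε₀ →
        ∀ (u : EuclideanSpace ℝ (Fin 3) → ℝ) (x₀ : EuclideanSpace ℝ (Fin 3)),
          x₀ ∈ ball (0 : EuclideanSpace ℝ (Fin 3)) (1 / 4) →
          ContDiffAt ℝ 2 u x₀ →
          ∀ (v : EuclideanSpace ℝ (Fin 3) → ℝ),
            v = (fun p => u p + 16 * ε * ((p 0) ^ 2 + (p 1) ^ 2 + (p 2) ^ 2)) →
            (hessianMatrix v x₀).PosSemidef →
            ‖gradient v x₀‖ ≤ ε / 2 →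
            ∀ K : ℝ, 0 < K →
              (Xd θ (Xd θ u) x₀ + 1) *
                  (Yd θ (Yd θ u) x₀ + pd 2 (pd 2 u) x₀ + pd 2 u x₀ + 1) -
                (Yd θ (Xd θ u) x₀) ^ 2 - (pd 2 (Xd θ u) x₀) ^ 2 = K →
              0 < Xd θ (Xd θ u) x₀ + 1 →
              0 < Yd θ (Yd θ u) x₀ + pd 2 (pd 2 u) x₀ + pd 2 u x₀ + 1 →
              Xd θ (Xd θ v) x₀ + Yd θ (Yd θ v) x₀ + pd 2 (pd 2 v) x₀ + 1 / 2 ≤ 2 * K ∧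
                (hessianMatrix v x₀).det ≤ (2 * K / 3) ^ 3 := by
  refine ⟨1 / 200, by norm_num, ?_⟩
  intro θ ε hε hε₀ u x₀ hx₀ hu v hv hM hgrad K hK heq hapos hbpos
  set c := Real.cos θ with hc
  set s := Real.sin θ with hs
  have hcs : c ^ 2 + s ^ 2 = 1 := by
    rw [hc, hs, add_comm]; exact Real.sin_sq_add_cos_sq θ
  -- v is C² at x₀
  have hv2 : ContDiffAt ℝ 2 v x₀ := by
    rw [hv]; exact hu.add (qf_contDiff ε).contDiffAt
  -- eventual differentiability of u
  have huev : ∀ᶠ y in nhds x₀, DifferentiableAt ℝ u y :=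
    (hu.eventually (by norm_num)).mono fun y hy => hy.differentiableAt (by norm_num)
  -- first derivatives of v
  have hpdv : ∀ j : Fin 3, ∀ᶠ y in nhds x₀, pd j v y = pd j u y + 32 * ε * y j := by
    intro j
    filter_upwards [huev] with y hy
    have h : HasFDerivAt v (fderiv ℝ u y + qD ε y) y := by
      rw [hv]; exact hy.hasFDerivAt.add (qf_hasFDerivAt ε y)
    simp [pd, h.fderiv, qD_apply_single ε y j]
  -- Hessian entries of v vs u
  have hud : ∀ j, DifferentiableAt ℝ (pd j u) x₀ := fun j => pd_differentiableAt hu j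
  have hHuv : ∀ i j : Fin 3, pd i (pd j v) x₀ =
      pd i (pd j u) x₀ + (if i = j then 32 * ε else 0) := by
    intro i j
    have hev : pd j v =ᶠ[nhds x₀] fun y => pd j u y + 32 * ε * y j := hpdv j
    have hd : HasFDerivAt (fun y => pd j u y + 32 * ε * y j)
        (fderiv ℝ (pd j u) x₀ + (32 * ε) • P j) x₀ :=
      (hud j).hasFDerivAt.add ((hasFDerivAt_coord j x₀).const_mul (32 * ε))
    have h1 : fderiv ℝ (pd j v) x₀ = fderiv ℝ (fun y => pd j u y + 32 * ε * y j) x₀ :=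
      hev.fderiv_eq
    show fderiv ℝ (pd j v) x₀ (EuclideanSpace.single i (1 : ℝ)) = _
    rw [h1, hd.fderiv]
    simp [pd, EuclideanSpace.single_apply, eq_comm]
  -- pd 2 of v at x₀
  have hvt : pd 2 v x₀ = pd 2 u x₀ + 32 * ε * x₀ 2 := (hpdv 2).self_of_nhds
  -- gradient bound
  have hgrad2 : |pd 2 v x₀| ≤ ε / 2 := by
    have h1 : (inner ℝ (gradient v x₀) (EuclideanSpace.single 2 (1 : ℝ)) : ℝ) = pd 2 v x₀ :=
      InnerProductSpace.toDual_symm_apply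
    have h2 := abs_real_inner_le_norm (gradient v x₀) (EuclideanSpace.single 2 (1 : ℝ))
    rw [h1] at h2
    simp only [EuclideanSpace.norm_single, norm_one, mul_one] at h2
    linarith
  -- coordinate bound
  have hx2 : |x₀ 2| ≤ 1 / 4 := by
    have h1 : ‖x₀‖ < 1 / 4 := by simpa using hx₀
    have h2 : |x₀ 2| ≤ ‖x₀‖ := by
      have h3 := abs_real_inner_le_norm (EuclideanSpace.single (2 : Fin 3) (1 : ℝ)) x₀
      simpa [EuclideanSpace.inner_single_left, EuclideanSpace.norm_single] using h3
    linarith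
  -- abbreviations for second derivatives of u
  set XXu := Xd θ (Xd θ u) x₀ with hXXu
  set YYu := Yd θ (Yd θ u) x₀ with hYYu
  set TTu := pd 2 (pd 2 u) x₀ with hTTu
  set YXu := Yd θ (Xd θ u) x₀ with hYXu
  set TXu := pd 2 (Xd θ u) x₀ with hTXu
  set ut := pd 2 u x₀ with hut
  -- matrix entries
  set M := hessianMatrix v x₀ with hMdef
  have hMe : ∀ i j : Fin 3, M i j = pd i (pd j v) x₀ := fun i j => rfl
  -- unfolding of applied Xd, Yd
  have hXapp : ∀ (g : E3 → ℝ) (x : E3), Xd θ g x = c * pd 0 g x - s * pd 1 g x :=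
    fun _ _ => rfl
  have hYapp : ∀ (g : E3 → ℝ) (x : E3), Yd θ g x = s * pd 0 g x + c * pd 1 g x :=
    fun _ _ => rfl
  -- second derivatives of v in terms of matrix entries
  have hXXv : Xd θ (Xd θ v) x₀ =
      c * (c * M 0 0 - s * M 0 1) - s * (c * M 1 0 - s * M 1 1) := by
    rw [hXapp (Xd θ v) x₀, pd_Xd hv2 θ 0, pd_Xd hv2 θ 1, hMe 0 0, hMe 0 1, hMe 1 0, hMe 1 1]
  have hYYv : Yd θ (Yd θ v) x₀ =
      s * (s * M 0 0 + c * M 0 1) + c * (s * M 1 0 + c * M 1 1) := by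
    rw [hYapp (Yd θ v) x₀, pd_Yd hv2 θ 0, pd_Yd hv2 θ 1, hMe 0 0, hMe 0 1, hMe 1 0, hMe 1 1]
  have hYXv : Yd θ (Xd θ v) x₀ =
      s * (c * M 0 0 - s * M 0 1) + c * (c * M 1 0 - s * M 1 1) := by
    rw [hYapp (Xd θ v) x₀, pd_Xd hv2 θ 0, pd_Xd hv2 θ 1, hMe 0 0, hMe 0 1, hMe 1 0, hMe 1 1]
  have hTXv : pd 2 (Xd θ v) x₀ = c * M 2 0 - s * M 2 1 := by
    rw [pd_Xd hv2 θ 2, hMe 2 0, hMe 2 1]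
  have hTTv : pd 2 (pd 2 v) x₀ = M 2 2 := (hMe 2 2).symm
  -- express second derivatives of u
  have hXXu' : XXu = c * (c * pd 0 (pd 0 u) x₀ - s * pd 0 (pd 1 u) x₀)
      - s * (c * pd 1 (pd 0 u) x₀ - s * pd 1 (pd 1 u) x₀) := by
    rw [hXXu, hXapp (Xd θ u) x₀, pd_Xd hu θ 0, pd_Xd hu θ 1]
  have hYYu' : YYu = s * (s * pd 0 (pd 0 u) x₀ + c * pd 0 (pd 1 u) x₀)
      + c * (s * pd 1 (pd 0 u) x₀ + c * pd 1 (pd 1 u) x₀) := by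
    rw [hYYu, hYapp (Yd θ u) x₀, pd_Yd hu θ 0, pd_Yd hu θ 1]
  have hYXu' : YXu = s * (c * pd 0 (pd 0 u) x₀ - s * pd 0 (pd 1 u) x₀)
      + c * (c * pd 1 (pd 0 u) x₀ - s * pd 1 (pd 1 u) x₀) := by
    rw [hYXu, hYapp (Xd θ u) x₀, pd_Xd hu θ 0, pd_Xd hu θ 1]
  have hTXu' : TXu = c * pd 2 (pd 0 u) x₀ - s * pd 2 (pd 1 u) x₀ := by
    rw [hTXu, pd_Xd hu θ 2]
  -- matrix entries in terms of u
  have hMu : ∀ i j : Fin 3, M i j = pd i (pd j u) x₀ + (if i = j then 32 * ε else 0) :=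
    fun i j => (hMe i j).trans (hHuv i j)
  -- second derivatives of v in terms of those of u
  have E1 : Xd θ (Xd θ v) x₀ = XXu + 32 * ε := by
    rw [hXXv, hXXu', hMu 0 0, hMu 0 1, hMu 1 0, hMu 1 1]
    norm_num
    linear_combination (32 * ε) * hcs
  have E2 : Yd θ (Yd θ v) x₀ = YYu + 32 * ε := by
    rw [hYYv, hYYu', hMu 0 0, hMu 0 1, hMu 1 0, hMu 1 1]
    norm_num
    linear_combination (32 * ε) * hcs
  have E3 : pd 2 (pd 2 v) x₀ = TTu + 32 * ε := by
    rw [hTTv, hMu 2 2, hTTu]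
    simp
  have E4 : Yd θ (Xd θ v) x₀ = YXu := by
    rw [hYXv, hYXu', hMu 0 0, hMu 0 1, hMu 1 0, hMu 1 1]
    norm_num
    ring
  have E5 : pd 2 (Xd θ v) x₀ = TXu := by
    rw [hTXv, hTXu', hMu 2 0, hMu 2 1]
    rw [if_neg (by decide : ¬((2:Fin 3) = 0)), if_neg (by decide : ¬((2:Fin 3) = 1))]
    ring
  -- positivity of the quadratic forms
  have hAq : 0 ≤ Xd θ (Xd θ v) x₀ := by
    have h := psd_quad hM ![c, -s, 0]
    have he : ![c, -s, 0] ⬝ᵥ M *ᵥ ![c, -s, 0] =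
        c * (c * M 0 0 - s * M 0 1) - s * (c * M 1 0 - s * M 1 1) := by
      simp [dotProduct, Matrix.mulVec, Fin.sum_univ_three]
      ring
    rw [hXXv]; rw [he] at h; exact h
  have hBq : 0 ≤ Yd θ (Yd θ v) x₀ := by
    have h := psd_quad hM ![s, c, 0]
    have he : ![s, c, 0] ⬝ᵥ M *ᵥ ![s, c, 0] =
        s * (s * M 0 0 + c * M 0 1) + c * (s * M 1 0 + c * M 1 1) := by
      simp [dotProduct, Matrix.mulVec, Fin.sum_univ_three]
      ring
    rw [hYYv]; rw [he] at h; exact h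
  have hCq : 0 ≤ pd 2 (pd 2 v) x₀ := by
    have h := psd_quad hM ![0, 0, 1]
    have he : ![(0:ℝ), 0, 1] ⬝ᵥ M *ᵥ ![0, 0, 1] = M 2 2 := by
      simp [dotProduct, Matrix.mulVec, Fin.sum_univ_three]
    rw [hTTv]; rw [he] at h; exact h
  -- Cauchy-Schwarz inequalities
  have hcs1 : (Yd θ (Xd θ v) x₀) ^ 2 ≤ (Yd θ (Yd θ v) x₀) * (Xd θ (Xd θ v) x₀) := by
    have h := psd_cs hM ![s, c, 0] ![c, -s, 0]
    have he1 : ![s, c, 0] ⬝ᵥ M *ᵥ ![c, -s, 0] =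
        s * (c * M 0 0 - s * M 0 1) + c * (c * M 1 0 - s * M 1 1) := by
      simp [dotProduct, Matrix.mulVec, Fin.sum_univ_three]
      ring
    have he2 : ![s, c, 0] ⬝ᵥ M *ᵥ ![s, c, 0] =
        s * (s * M 0 0 + c * M 0 1) + c * (s * M 1 0 + c * M 1 1) := by
      simp [dotProduct, Matrix.mulVec, Fin.sum_univ_three]
      ring
    have he3 : ![c, -s, 0] ⬝ᵥ M *ᵥ ![c, -s, 0] =
        c * (c * M 0 0 - s * M 0 1) - s * (c * M 1 0 - s * M 1 1) := by
      simp [dotProduct, Matrix.mulVec, Fin.sum_univ_three]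
      ring
    rw [he1, he2, he3] at h
    rw [hYXv, hYYv, hXXv]
    linarith only [h]
  have hcs2 : (pd 2 (Xd θ v) x₀) ^ 2 ≤ (pd 2 (pd 2 v) x₀) * (Xd θ (Xd θ v) x₀) := by
    have h := psd_cs hM ![0, 0, 1] ![c, -s, 0]
    have he1 : ![(0:ℝ), 0, 1] ⬝ᵥ M *ᵥ ![c, -s, 0] = c * M 2 0 - s * M 2 1 := by
      simp [dotProduct, Matrix.mulVec, Fin.sum_univ_three]
      ring
    have he2 : ![(0:ℝ), 0, 1] ⬝ᵥ M *ᵥ ![0, 0, 1] = M 2 2 := by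
      simp [dotProduct, Matrix.mulVec, Fin.sum_univ_three]
    have he3 : ![c, -s, 0] ⬝ᵥ M *ᵥ ![c, -s, 0] =
        c * (c * M 0 0 - s * M 0 1) - s * (c * M 1 0 - s * M 1 1) := by
      simp [dotProduct, Matrix.mulVec, Fin.sum_univ_three]
      ring
    rw [he1, he2, he3] at h
    rw [hTXv, hTTv, hXXv]
    linarith only [h]
  -- rephrase in u-variables
  have F1 : 0 ≤ XXu + 32 * ε := by rw [← E1]; exact hAq
  have F2 : 0 ≤ YYu + 32 * ε := by rw [← E2]; exact hBq
  have F3 : 0 ≤ TTu + 32 * ε := by rw [← E3]; exact hCq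
  have F4 : YXu ^ 2 ≤ (YYu + 32 * ε) * (XXu + 32 * ε) := by
    rw [← E4, ← E2, ← E1]; exact hcs1
  have F5 : TXu ^ 2 ≤ (TTu + 32 * ε) * (XXu + 32 * ε) := by
    rw [← E5, ← E3, ← E1]; exact hcs2
  -- lower bound on u_t
  have F6 : -(17 * ε / 2) ≤ ut := by
    have h1 := (abs_le.mp hgrad2).1
    have h2 := (abs_le.mp hx2).2
    rw [hvt] at h1
    have hmul : 32 * ε * x₀ 2 ≤ 32 * ε * (1 / 4) :=
      mul_le_mul_of_nonneg_left h2 (by linarith)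
    linarith only [h1, hmul]
  -- key scalar inequality
  have hδ : 0 ≤ 2 * (ut + 1 - 64 * ε) - 1 := by linarith only [F6, hε₀, hε]
  have h32 : 0 ≤ 2 * (1 - 32 * ε) - 1 := by linarith only [hε₀, hε]
  have F23 : 0 ≤ YYu + TTu + 64 * ε := by linarith only [F2, F3]
  have hp3 : 1 / 2 ≤ 2 * (1 - 32 * ε) * (ut + 1 - 64 * ε) := by
    linarith only [mul_nonneg hδ h32, hδ, h32]
  have hKge : 2 * ((XXu + 1) * (YYu + TTu + ut + 1)) - 2 * ((YYu + 32 * ε) * (XXu + 32 * ε))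
      - 2 * ((TTu + 32 * ε) * (XXu + 32 * ε)) ≤ 2 * K := by
    linarith only [F4, F5, heq]
  have hident : 2 * ((XXu + 1) * (YYu + TTu + ut + 1)) - 2 * ((YYu + 32 * ε) * (XXu + 32 * ε))
      - 2 * ((TTu + 32 * ε) * (XXu + 32 * ε))
      = 2 * ((XXu + 32 * ε) * (ut + 1 - 64 * ε)) + 2 * ((1 - 32 * ε) * (YYu + TTu + 64 * ε))
        + 2 * ((1 - 32 * ε) * (ut + 1 - 64 * ε)) := by
    ring
  have t1 : XXu + 32 * ε ≤ 2 * ((XXu + 32 * ε) * (ut + 1 - 64 * ε)) := by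
    linarith only [mul_nonneg F1 hδ]
  have t2 : YYu + TTu + 64 * ε ≤ 2 * ((1 - 32 * ε) * (YYu + TTu + 64 * ε)) := by
    linarith only [mul_nonneg F23 h32]
  have hp3' : 1 / 2 ≤ 2 * ((1 - 32 * ε) * (ut + 1 - 64 * ε)) := by linarith only [hp3]
  have goal1 : Xd θ (Xd θ v) x₀ + Yd θ (Yd θ v) x₀ + pd 2 (pd 2 v) x₀ + 1 / 2 ≤ 2 * K := by
    rw [E1, E2, E3]
    linarith only [hKge, hident.le, hident.ge, t1, t2, hp3']
  refine ⟨goal1, ?_⟩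
  -- trace identity
  have htr : M.trace = Xd θ (Xd θ v) x₀ + Yd θ (Yd θ v) x₀ + pd 2 (pd 2 v) x₀ := by
    rw [Matrix.trace_fin_three, hXXv, hYYv, hTTv]
    linear_combination (-(M 0 0) - M 1 1) * hcs
  have hdetle := psd_det_le_cube hM
  have htr0 : 0 ≤ M.trace := by rw [htr]; linarith only [hAq, hBq, hCq]
  have htrK : M.trace / 3 ≤ 2 * K / 3 := by rw [htr]; linarith only [goal1]
  calc M.det ≤ (M.trace / 3) ^ 3 := hdetle
    _ ≤ (2 * K / 3) ^ 3 := by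
        apply pow_le_pow_left₀ (by linarith only [htr0]) htrK
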